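/- Let n, m ≥ 1 and let π ∈ J_{2n,2m}; set I = I_{2n+2m}. Then all the even numbers 2, 4, …, 2n lie in a single cycle of I∘π; all the even numbers 2n+2, 2n+4, …, 2n+2m lie in a single cycle of I∘π; and these two cycles are distinct, i.e., no even number of {1,…,2n} lies in the same cycle of I∘π as an even number of {2n+1,…,2n+2m}. -/

import Mathlib

noncomputable def cycleCount {N : ℕ} (π : Equiv.Perm (Fin N)) : ℕ :=
  Set.ncard {O : Set (Fin N) | ∃ x, O = {y | π.SameCycle x y}}

noncomputable def cyclesIn {N : ℕ} (π : Equiv.Perm (Fin N)) (C : Set (Fin N)) : ℕ :=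
  Set.ncard {O : Set (Fin N) | (∃ x, O = {y | π.SameCycle x y}) ∧ O ⊆ C}

/-- The annular permutation `γ_{p,q}` of `{1,…,p+q}` (0-indexed as `Fin (p+q)`),
with the two cycles `(1,…,p)` and `(p+1,…,p+q)`. -/
def annularGamma (p q : ℕ) : Equiv.Perm (Fin (p + q)) :=
  finSumFinEquiv.permCongr ((finRotate p).sumCongr (finRotate q))

/-- The interval involution `I_N = (1 2)(3 4)⋯(N-1 N)` of `{1,…,N}`
(0-indexed: swaps `2i ↔ 2i+1`), for `N` even. -/
def intervalInvolution (N : ℕ) : Equiv.Perm (Fin N) :=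
  Function.Involutive.toPerm
    (fun x => ⟨if x.val % 2 = 0 then min (x.val + 1) (N - 1) else x.val - 1, by
      rcases x with ⟨v, hv⟩
      dsimp only
      split <;> omega⟩)
    (by
      intro x
      rcases x with ⟨v, hv⟩
      apply Fin.ext
      dsimp only
      split_ifs <;> omega)

/-- The subgroup generated by `π` and `ρ` acts transitively on `Fin N`. -/
def JointTrans {N : ℕ} (π ρ : Equiv.Perm (Fin N)) : Prop :=
  ∀ x y : Fin N, ∃ g ∈ Subgroup.closure ({π, ρ} : Set (Equiv.Perm (Fin N))), g x = y

/-- `α` separates even numbers: no cycle of `α` contains two distinct even numbers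
(an element `x : Fin N` represents the number `x.val + 1`). -/
def SeparatesEven {N : ℕ} (α : Equiv.Perm (Fin N)) : Prop :=
  ∀ x y : Fin N, α.SameCycle x y → (x.val + 1) % 2 = 0 → (y.val + 1) % 2 = 0 → x = y

/-- `π ∈ S_NC(p,q)`: annular non-crossing permutations. -/
def AnnularNC (p q : ℕ) (π : Equiv.Perm (Fin (p + q))) : Prop :=
  JointTrans π (annularGamma p q) ∧
    cycleCount π + cycleCount (π⁻¹ * annularGamma p q) = p + q

/-- `A` witnesses bipartiteness of the graph `G_π`: `π(A) = A` and for each `i`,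
exactly one of the (1-indexed) numbers `2i-1`, `2i` belongs to `A`. -/
def BipartSet {N : ℕ} (π : Equiv.Perm (Fin N)) (A : Set (Fin N)) : Prop :=
  (⇑π) '' A = A ∧ ∀ i : ℕ, ∀ h : 2 * i + 1 < N,
    Xor' ((⟨2 * i, Nat.lt_of_succ_lt h⟩ : Fin N) ∈ A) ((⟨2 * i + 1, h⟩ : Fin N) ∈ A)

/-- The graph `G_π` is bipartite. -/
def GraphBipartite {N : ℕ} (π : Equiv.Perm (Fin N)) : Prop :=
  ∃ A : Set (Fin N), BipartSet π A

/-- `π ∈ J_{2n,2m}`: annular non-crossing, bipartite graph, and `π⁻¹γ` separates even. -/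
def memJ (n m : ℕ) (π : Equiv.Perm (Fin (2 * n + 2 * m))) : Prop :=
  AnnularNC (2 * n) (2 * m) π ∧ GraphBipartite π ∧
    SeparatesEven (π⁻¹ * annularGamma (2 * n) (2 * m))

private lemma finRotate_val : ∀ (k : ℕ) (i : Fin k),
    ((finRotate k) i).val = if i.val + 1 < k then i.val + 1 else 0
  | 0, i => i.elim0
  | k + 1, i => by
    rw [coe_finRotate]
    rcases eq_or_ne i (Fin.last k) with h | h
    · subst h; simp
    · have h2 : i.val ≠ k := fun hh => h (Fin.ext (by simpa using hh))
      have h3 := i.isLt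
      rw [if_neg h, if_pos (by omega)]

private lemma gamma_val (p q : ℕ) (x : Fin (p + q)) :
    (annularGamma p q x).val =
      if x.val < p then (if x.val + 1 < p then x.val + 1 else 0)
      else (if x.val + 1 < p + q then x.val + 1 else p) := by
  have hx := x.isLt
  rcases Nat.lt_or_ge x.val p with h | h
  · have hxe : x = finSumFinEquiv (Sum.inl (⟨x.val, h⟩ : Fin p)) := by
      apply Fin.ext; simp
    rw [annularGamma]
    nth_rw 1 [hxe]
    rw [Equiv.permCongr_apply, Equiv.symm_apply_apply]
    simp only [Equiv.Perm.sumCongr_apply, Sum.map_inl, finSumFinEquiv_apply_left,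
      Fin.coe_castAdd, finRotate_val, if_pos h]
  · have h2 : x.val - p < q := by omega
    have hxe : x = finSumFinEquiv (Sum.inr (⟨x.val - p, h2⟩ : Fin q)) := by
      apply Fin.ext; simp; omega
    rw [annularGamma]
    nth_rw 1 [hxe]
    rw [Equiv.permCongr_apply, Equiv.symm_apply_apply]
    simp only [Equiv.Perm.sumCongr_apply, Sum.map_inr, finSumFinEquiv_apply_right,
      Fin.coe_natAdd, finRotate_val, if_neg (by omega : ¬ x.val < p)]
    split_ifs <;> omega

private lemma interval_val (N : ℕ) (x : Fin N) :
    (intervalInvolution N x).val =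
      if x.val % 2 = 0 then min (x.val + 1) (N - 1) else x.val - 1 := rfl

private lemma beta_spec (n m : ℕ) (hn : 1 ≤ n) (hm : 1 ≤ m) (x : Fin (2 * n + 2 * m)) :
    ((intervalInvolution (2 * n + 2 * m) * annularGamma (2 * n) (2 * m)) x).val =
      if x.val % 2 = 0 then x.val
      else if x.val + 2 < 2 * n then x.val + 2
      else if x.val < 2 * n then 1
      else if x.val + 2 < 2 * n + 2 * m then x.val + 2
      else 2 * n + 1 := by
  have hx := x.isLt
  rw [Equiv.Perm.mul_apply, interval_val, gamma_val]
  split_ifs <;> omega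

private lemma beta_fix_even (n m : ℕ) (hn : 1 ≤ n) (hm : 1 ≤ m)
    (x : Fin (2 * n + 2 * m)) (h : x.val % 2 = 0) :
    (intervalInvolution (2 * n + 2 * m) * annularGamma (2 * n) (2 * m)) x = x := by
  apply Fin.ext
  rw [beta_spec n m hn hm, if_pos h]

private lemma beta_odd_lt (n m : ℕ) (hn : 1 ≤ n) (hm : 1 ≤ m)
    (x : Fin (2 * n + 2 * m)) (h1 : x.val % 2 = 1) (h2 : x.val < 2 * n) :
    ((intervalInvolution (2 * n + 2 * m) * annularGamma (2 * n) (2 * m)) x).val % 2 = 1 ∧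
      ((intervalInvolution (2 * n + 2 * m) * annularGamma (2 * n) (2 * m)) x).val < 2 * n := by
  have hb := beta_spec n m hn hm x
  have hx := x.isLt
  split_ifs at hb <;> omega

private lemma beta_odd_ge (n m : ℕ) (hn : 1 ≤ n) (hm : 1 ≤ m)
    (x : Fin (2 * n + 2 * m)) (h1 : x.val % 2 = 1) (h2 : 2 * n ≤ x.val) :
    ((intervalInvolution (2 * n + 2 * m) * annularGamma (2 * n) (2 * m)) x).val % 2 = 1 ∧
      2 * n ≤ ((intervalInvolution (2 * n + 2 * m) * annularGamma (2 * n) (2 * m)) x).val := by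
  have hb := beta_spec n m hn hm x
  have hx := x.isLt
  split_ifs at hb <;> omega

private lemma beta_pow_lt (n m : ℕ) (hn : 1 ≤ n) (hm : 1 ≤ m) :
    ∀ (k : ℕ) (x : Fin (2 * n + 2 * m)), x.val % 2 = 1 → x.val + 2 * k < 2 * n →
      (((intervalInvolution (2 * n + 2 * m) * annularGamma (2 * n) (2 * m)) ^ k) x).val
        = x.val + 2 * k := by
  intro k
  induction k with
  | zero => intro x _ _; simp
  | succ k ih =>
    intro x hodd hlt
    have h2 := ih x hodd (by omega)
    rw [pow_succ', Equiv.Perm.mul_apply, beta_spec n m hn hm, h2]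
    split_ifs <;> omega

private lemma beta_pow_ge (n m : ℕ) (hn : 1 ≤ n) (hm : 1 ≤ m) :
    ∀ (k : ℕ) (x : Fin (2 * n + 2 * m)), x.val % 2 = 1 → 2 * n ≤ x.val →
      x.val + 2 * k < 2 * n + 2 * m →
      (((intervalInvolution (2 * n + 2 * m) * annularGamma (2 * n) (2 * m)) ^ k) x).val
        = x.val + 2 * k := by
  intro k
  induction k with
  | zero => intro x _ _ _; simp
  | succ k ih =>
    intro x hodd hge hlt
    have h2 := ih x hodd hge (by omega)
    rw [pow_succ', Equiv.Perm.mul_apply, beta_spec n m hn hm, h2]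
    split_ifs <;> omega

private lemma tau_eq (n m : ℕ) (π : Equiv.Perm (Fin (2 * n + 2 * m)))
    (z : Fin (2 * n + 2 * m)) :
    (intervalInvolution (2 * n + 2 * m) * π) z =
      (intervalInvolution (2 * n + 2 * m) * annularGamma (2 * n) (2 * m))
        ((π⁻¹ * annularGamma (2 * n) (2 * m))⁻¹ z) := by
  simp [Equiv.Perm.mul_apply, mul_inv_rev]

private lemma key_merge (n m : ℕ) (hn : 1 ≤ n) (hm : 1 ≤ m)
    (π : Equiv.Perm (Fin (2 * n + 2 * m)))
    (hsep : SeparatesEven (π⁻¹ * annularGamma (2 * n) (2 * m)))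
    (x : Fin (2 * n + 2 * m)) (hodd : x.val % 2 = 1) :
    (intervalInvolution (2 * n + 2 * m) * π).SameCycle x
      ((intervalInvolution (2 * n + 2 * m) * annularGamma (2 * n) (2 * m)) x) := by
  classical
  set α := π⁻¹ * annularGamma (2 * n) (2 * m) with hα
  set τ := intervalInvolution (2 * n + 2 * m) * π with hτ
  set β := intervalInvolution (2 * n + 2 * m) * annularGamma (2 * n) (2 * m) with hβ
  have hex : ∃ s : ℕ, 0 < s ∧ (α⁻¹ ^ s) x = x :=
    ⟨orderOf α⁻¹, orderOf_pos α⁻¹, by rw [pow_orderOf_eq_one]; rfl⟩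
  set t := Nat.find hex with hts
  have key : ∀ s, s < t → (τ ^ s) x = (α⁻¹ ^ s) x := by
    intro s
    induction s with
    | zero => intro _; simp
    | succ s ih =>
      intro hst
      have hs : s < t := by omega
      have heven : ((α⁻¹ ^ (s + 1)) x).val % 2 = 0 := by
        by_contra hodd2
        have hsc : α.SameCycle x ((α⁻¹ ^ (s + 1)) x) :=
          ⟨-((s + 1 : ℕ) : ℤ), by rw [zpow_neg, zpow_natCast, ← inv_pow]⟩
        have heq := hsep x _ hsc (by omega) (by omega)
        exact (Nat.find_min hex hst) ⟨Nat.succ_pos s, heq.symm⟩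
      calc (τ ^ (s + 1)) x = τ ((τ ^ s) x) := by rw [pow_succ', Equiv.Perm.mul_apply]
        _ = τ ((α⁻¹ ^ s) x) := by rw [ih hs]
        _ = β (α⁻¹ ((α⁻¹ ^ s) x)) := tau_eq n m π _
        _ = β ((α⁻¹ ^ (s + 1)) x) := by rw [pow_succ']; rfl
        _ = (α⁻¹ ^ (s + 1)) x := beta_fix_even n m hn hm _ heven
  obtain ⟨t', ht'⟩ : ∃ t', t = t' + 1 := ⟨t - 1, by have := (Nat.find_spec hex).1; omega⟩
  have hfin : (τ ^ (t' + 1)) x = β x := by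
    calc (τ ^ (t' + 1)) x = τ ((τ ^ t') x) := by rw [pow_succ', Equiv.Perm.mul_apply]
      _ = τ ((α⁻¹ ^ t') x) := by rw [key t' (by omega)]
      _ = β ((α⁻¹ ^ (t' + 1)) x) := by
          rw [tau_eq n m π, pow_succ']; rfl
      _ = β x := by rw [← ht', (Nat.find_spec hex).2]
  exact ⟨((t' + 1 : ℕ) : ℤ), by rw [zpow_natCast]; exact hfin⟩

private lemma chain_lt (n m : ℕ) (hn : 1 ≤ n) (hm : 1 ≤ m)
    (π : Equiv.Perm (Fin (2 * n + 2 * m)))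
    (hsep : SeparatesEven (π⁻¹ * annularGamma (2 * n) (2 * m))) :
    ∀ (k : ℕ) (x : Fin (2 * n + 2 * m)), x.val % 2 = 1 → x.val < 2 * n →
      (intervalInvolution (2 * n + 2 * m) * π).SameCycle x
        (((intervalInvolution (2 * n + 2 * m) * annularGamma (2 * n) (2 * m)) ^ k) x) := by
  intro k
  induction k with
  | zero => intro x _ _; simp; exact Equiv.Perm.SameCycle.refl _ _
  | succ k ih =>
    intro x hodd hlt
    have hstep : ∀ j : ℕ,
        ((((intervalInvolution (2 * n + 2 * m) * annularGamma (2 * n) (2 * m)) ^ j) x).val % 2 = 1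
          ∧ (((intervalInvolution (2 * n + 2 * m) * annularGamma (2 * n) (2 * m)) ^ j) x).val < 2 * n) := by
      intro j
      induction j with
      | zero => simpa using ⟨hodd, hlt⟩
      | succ j ihj =>
        rw [pow_succ', Equiv.Perm.mul_apply]
        exact beta_odd_lt n m hn hm _ ihj.1 ihj.2
    have h1 := ih x hodd hlt
    have h2 := key_merge n m hn hm π hsep _ (hstep k).1
    rw [pow_succ', Equiv.Perm.mul_apply]
    exact h1.trans h2

private lemma chain_ge (n m : ℕ) (hn : 1 ≤ n) (hm : 1 ≤ m)
    (π : Equiv.Perm (Fin (2 * n + 2 * m)))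
    (hsep : SeparatesEven (π⁻¹ * annularGamma (2 * n) (2 * m))) :
    ∀ (k : ℕ) (x : Fin (2 * n + 2 * m)), x.val % 2 = 1 → 2 * n ≤ x.val →
      (intervalInvolution (2 * n + 2 * m) * π).SameCycle x
        (((intervalInvolution (2 * n + 2 * m) * annularGamma (2 * n) (2 * m)) ^ k) x) := by
  intro k
  induction k with
  | zero => intro x _ _; simp; exact Equiv.Perm.SameCycle.refl _ _
  | succ k ih =>
    intro x hodd hge
    have hstep : ∀ j : ℕ,
        ((((intervalInvolution (2 * n + 2 * m) * annularGamma (2 * n) (2 * m)) ^ j) x).val % 2 = 1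
          ∧ 2 * n ≤ (((intervalInvolution (2 * n + 2 * m) * annularGamma (2 * n) (2 * m)) ^ j) x).val) := by
      intro j
      induction j with
      | zero => simpa using ⟨hodd, hge⟩
      | succ j ihj =>
        rw [pow_succ', Equiv.Perm.mul_apply]
        exact beta_odd_ge n m hn hm _ ihj.1 ihj.2
    have h1 := ih x hodd hge
    have h2 := key_merge n m hn hm π hsep _ (hstep k).1
    rw [pow_succ', Equiv.Perm.mul_apply]
    exact h1.trans h2

theorem stmt_8 (n m : ℕ) (hn : 1 ≤ n) (hm : 1 ≤ m)
    (π : Equiv.Perm (Fin (2 * n + 2 * m))) (hπ : memJ n m π) :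
    (∀ x y : Fin (2 * n + 2 * m),
      (x.val + 1) % 2 = 0 → (y.val + 1) % 2 = 0 →
      x.val < 2 * n → y.val < 2 * n →
      (intervalInvolution (2 * n + 2 * m) * π).SameCycle x y) ∧
    (∀ x y : Fin (2 * n + 2 * m),
      (x.val + 1) % 2 = 0 → (y.val + 1) % 2 = 0 →
      2 * n ≤ x.val → 2 * n ≤ y.val →
      (intervalInvolution (2 * n + 2 * m) * π).SameCycle x y) ∧
    (∀ x y : Fin (2 * n + 2 * m),
      (x.val + 1) % 2 = 0 → (y.val + 1) % 2 = 0 →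
      x.val < 2 * n → 2 * n ≤ y.val →
      ¬ (intervalInvolution (2 * n + 2 * m) * π).SameCycle x y) := by
  have hsep : SeparatesEven (π⁻¹ * annularGamma (2 * n) (2 * m)) := hπ.2.2
  refine ⟨?_, ?_, ?_⟩
  · -- first block
    have main : ∀ x y : Fin (2 * n + 2 * m), x.val % 2 = 1 → y.val % 2 = 1 →
        x.val < 2 * n → y.val < 2 * n → x.val ≤ y.val →
        (intervalInvolution (2 * n + 2 * m) * π).SameCycle x y := by
      intro x y hx hy hxn hyn hle
      have hk : (((intervalInvolution (2 * n + 2 * m) * annularGamma (2 * n) (2 * m))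
          ^ ((y.val - x.val) / 2)) x) = y := by
        apply Fin.ext
        rw [beta_pow_lt n m hn hm _ x hx (by omega)]
        omega
      have := chain_lt n m hn hm π hsep ((y.val - x.val) / 2) x hx hxn
      rwa [hk] at this
    intro x y hx hy hxn hyn
    rcases le_total x.val y.val with h | h
    · exact main x y (by omega) (by omega) hxn hyn h
    · exact (main y x (by omega) (by omega) hyn hxn h).symm
  · -- second block
    have main : ∀ x y : Fin (2 * n + 2 * m), x.val % 2 = 1 → y.val % 2 = 1 →
        2 * n ≤ x.val → 2 * n ≤ y.val → x.val ≤ y.val →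
        (intervalInvolution (2 * n + 2 * m) * π).SameCycle x y := by
      intro x y hx hy hxn hyn hle
      have hyN := y.isLt
      have hk : (((intervalInvolution (2 * n + 2 * m) * annularGamma (2 * n) (2 * m))
          ^ ((y.val - x.val) / 2)) x) = y := by
        apply Fin.ext
        rw [beta_pow_ge n m hn hm _ x hx hxn (by omega)]
        omega
      have := chain_ge n m hn hm π hsep ((y.val - x.val) / 2) x hx hxn
      rwa [hk] at this
    intro x y hx hy hxn hyn
    rcases le_total x.val y.val with h | h
    · exact main x y (by omega) (by omega) hxn hyn h
    · exact (main y x (by omega) (by omega) hyn hxn h).symm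
  · -- distinctness
    intro x y hx hy hxn hyn hsc
    set α := π⁻¹ * annularGamma (2 * n) (2 * m) with hα
    set τ := intervalInvolution (2 * n + 2 * m) * π with hτ
    -- S: union of α-cycles through first-block odd elements
    set S : Fin (2 * n + 2 * m) → Prop := fun z =>
      ∃ o : Fin (2 * n + 2 * m), o.val % 2 = 1 ∧ o.val < 2 * n ∧ α.SameCycle o z with hS
    have hclosed : ∀ z, S z → S (τ z) := by
      intro z ⟨o, ho1, ho2, hsc'⟩
      have hsc'' : α.SameCycle o (α⁻¹ z) := Equiv.Perm.SameCycle.symm_apply_right hsc'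
      have htz : τ z = (intervalInvolution (2 * n + 2 * m)
          * annularGamma (2 * n) (2 * m)) (α⁻¹ z) := tau_eq n m π z
      rcases Nat.mod_two_eq_zero_or_one ((α⁻¹ z).val) with he' | hodd'
      · 
        refine ⟨o, ho1, ho2, ?_⟩
        rw [htz, beta_fix_even n m hn hm _ he']
        exact hsc''
      · have heq : o = α⁻¹ z := hsep o _ hsc'' (by omega) (by omega)
        have hb := beta_odd_lt n m hn hm o ho1 ho2
        refine ⟨(intervalInvolution (2 * n + 2 * m) * annularGamma (2 * n) (2 * m)) o,
          hb.1, hb.2, ?_⟩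
        rw [htz, ← heq]
    have hSx : S x := ⟨x, by omega, hxn, Equiv.Perm.SameCycle.refl _ _⟩
    obtain ⟨i, _, hi⟩ := hsc.exists_pow_eq'
    have hpow : ∀ j : ℕ, S ((τ ^ j) x) := by
      intro j
      induction j with
      | zero => simpa using hSx
      | succ j ihj =>
        rw [pow_succ', Equiv.Perm.mul_apply]
        exact hclosed _ ihj
    have hSy : S y := by rw [← hi]; exact hpow i
    obtain ⟨o, ho1, ho2, hsc'⟩ := hSy
    have h9 := congrArg Fin.val (hsep o y hsc' (by omega) (by omega))
    omega
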